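/- arXiv:1911.12630 — 4 statements merged into one kernel-verified Lean document; each statement's English description precedes it below -/
import Mathlib

section
/- Let Σ be a Riemannian surface with Gauss curvature K, let H, c be real constants with c ≠ 0, and let ν, h be smooth functions on Σ satisfying ‖∇ν + H∇h‖² = (H² − K + cν²)(1 − ν²), Δν = (2K − c(1+ν²) − 4H²)ν, and ‖∇h‖² = 1 − ν². If ν is a constant function with 0 < ν² < 1, then c < 0, 4H² < −c, K = 4H² + c, and ν² = (4H² + c)/c. -/
/-- Abstract calculus data on a (connected) Riemannian surface `S`:
a gradient operator with values in an inner product space `V`, and a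
Laplace–Beltrami operator, satisfying the basic properties that constants
have vanishing gradient and Laplacian, and that a function whose gradient
vanishes identically is constant (connectedness). -/
structure SurfaceCalculus (S : Type*) (V : Type*) [NormedAddCommGroup V]
    [InnerProductSpace ℝ V] where
  grad : (S → ℝ) → S → V
  laplacian : (S → ℝ) → S → ℝ
  grad_const : ∀ (a : ℝ) (x : S), grad (fun _ => a) x = 0
  laplacian_const : ∀ (a : ℝ) (x : S), laplacian (fun _ => a) x = 0
  const_of_grad_eq_zero : ∀ f : S → ℝ, (∀ x, grad f x = 0) → ∃ a, ∀ x, f x = a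

theorem stmt1 {S V : Type*} [NormedAddCommGroup V] [InnerProductSpace ℝ V] [Nonempty S]
    (D : SurfaceCalculus S V) (H c : ℝ) (hc : c ≠ 0) (K ν h : S → ℝ)
    (M1 : ∀ x, ‖D.grad ν x + H • D.grad h x‖^2 = (H^2 - K x + c*(ν x)^2) * (1 - (ν x)^2))
    (M2 : ∀ x, D.laplacian ν x = (2*K x - c*(1 + (ν x)^2) - 4*H^2) * ν x)
    (M3 : ∀ x, ‖D.grad h x‖^2 = 1 - (ν x)^2)
    (M4 : ∀ x, D.laplacian h x = 2*H*(ν x))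
    (a : ℝ) (hν : ∀ x, ν x = a) (ha0 : 0 < a^2) (ha1 : a^2 < 1) :
    c < 0 ∧ 4*H^2 < -c ∧ (∀ x, K x = 4*H^2 + c) ∧ a^2 = (4*H^2 + c)/c := by
  have hνf : ν = fun _ => a := funext hν
  have ha : a ≠ 0 := by intro h0; rw [h0] at ha0; norm_num at ha0
  have h1a : (0:ℝ) < 1 - a^2 := by linarith
  -- K x = c * a^2 from M1, M3
  have hK : ∀ x, K x = c * a^2 := by
    intro x
    have hg : D.grad ν x = 0 := by rw [hνf]; exact D.grad_const a x
    have h1 := M1 x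
    rw [hg, zero_add, norm_smul, mul_pow, M3 x, hν x] at h1
    have : |H|^2 = H^2 := sq_abs H
    rw [Real.norm_eq_abs, this] at h1
    have := mul_right_cancel₀ (ne_of_gt h1a) h1
    linarith
  -- laplacian ν = 0 gives K x = (c(1+a²)+4H²)/2
  have key : c * a^2 = c + 4*H^2 := by
    obtain ⟨x⟩ := ‹Nonempty S›
    have hl : D.laplacian ν x = 0 := by rw [hνf]; exact D.laplacian_const a x
    have h2 := M2 x
    rw [hl, hν x, hK x] at h2
    have h3 : 2*(c*a^2) - c*(1+a^2) - 4*H^2 = 0 := by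
      rcases mul_eq_zero.mp h2.symm with h | h
      · linarith
      · exact absurd h ha
    linarith
  have hcneg : c < 0 := by
    rcases lt_or_gt_of_ne hc with h | h
    · exact h
    · nlinarith
  refine ⟨hcneg, by nlinarith, fun x => by rw [hK x]; linarith, ?_⟩
  field_simp
  linarith
end

section
/- Let Ω = {z ∈ ℂ : Im z > 0} and K < 0. Define ν : Ω → ℝ by ν(z) = (√(−K)/2)(z + z̄)/|z|. For a Möbius transformation f(z) = (αz + β)/(γz + δ) with real coefficients and determinant 1, (ν∘f)(z) = (√(−K)/2)(2αγ|z|² + (αδ + βγ)(z + z̄) + 2βδ)/(|αz + β||γz + δ|). If ν∘f = ν or ν∘f = −ν on Ω, then αγ = 0 and βδ = 0. -/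
private lemma stmt11_aux_ne (p q : ℝ) (hpq : ¬(p = 0 ∧ q = 0)) (z : ℂ) (hz : 0 < z.im) :
    (p:ℂ)*z + q ≠ 0 := by
  intro h
  have him : p * z.im = 0 := by
    have := congrArg Complex.im h
    simpa using this
  have hp : p = 0 := by
    rcases mul_eq_zero.mp him with h | h
    · exact h
    · linarith
  have hq : q = 0 := by
    have := congrArg Complex.re h
    simp [hp] at this
    exact this
  exact hpq ⟨hp, hq⟩

private lemma stmt11_sq_abs (z : ℂ) : ((‖z‖ : ℝ) : ℂ)^2 = z * (starRingEnd ℂ) z := by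
  rw [Complex.mul_conj]
  exact_mod_cast congrArg (Complex.ofReal) (Complex.sq_norm z)

theorem stmt11 (K : ℝ) (hK : K < 0) (α β γ δ : ℝ) (hdet : α*δ - β*γ = 1) :
    let ν : ℂ → ℂ := fun z =>
      ((Real.sqrt (-K) : ℝ) : ℂ)/2 * (z + (starRingEnd ℂ) z) / ((‖z‖ : ℝ) : ℂ)
    let f : ℂ → ℂ := fun z => ((α : ℂ)*z + (β : ℂ)) / ((γ : ℂ)*z + (δ : ℂ))
    -- the displayed formula for ν∘f
    (∀ z : ℂ, 0 < z.im →
      ν (f z) = ((Real.sqrt (-K) : ℝ) : ℂ)/2 *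
        (2*(α : ℂ)*(γ : ℂ)*((‖z‖ : ℝ) : ℂ)^2 +
          ((α : ℂ)*(δ : ℂ) + (β : ℂ)*(γ : ℂ))*(z + (starRingEnd ℂ) z) +
          2*(β : ℂ)*(δ : ℂ)) /
        (((‖(α : ℂ)*z + (β : ℂ)‖ : ℝ) : ℂ) *
          ((‖(γ : ℂ)*z + (δ : ℂ)‖ : ℝ) : ℂ))) ∧
    -- if ν∘f = ν or ν∘f = -ν on Ω, then αγ = 0 and βδ = 0
    (((∀ z : ℂ, 0 < z.im → ν (f z) = ν z) ∨
      (∀ z : ℂ, 0 < z.im → ν (f z) = -ν z)) → α*γ = 0 ∧ β*δ = 0) := by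
  intro ν f
  have hab : ¬(α = 0 ∧ β = 0) := by rintro ⟨h1, h2⟩; simp [h1, h2] at hdet
  have hgd : ¬(γ = 0 ∧ δ = 0) := by rintro ⟨h1, h2⟩; simp [h1, h2] at hdet
  have hsqpos : 0 < Real.sqrt (-K) := Real.sqrt_pos.mpr (by linarith)
  have hc : ((Real.sqrt (-K) : ℝ) : ℂ) ≠ 0 := by
    exact_mod_cast ne_of_gt hsqpos
  have hform : ∀ z : ℂ, 0 < z.im →
      ν (f z) = ((Real.sqrt (-K) : ℝ) : ℂ)/2 *
        (2*(α : ℂ)*(γ : ℂ)*((‖z‖ : ℝ) : ℂ)^2 +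
          ((α : ℂ)*(δ : ℂ) + (β : ℂ)*(γ : ℂ))*(z + (starRingEnd ℂ) z) +
          2*(β : ℂ)*(δ : ℂ)) /
        (((‖(α : ℂ)*z + (β : ℂ)‖ : ℝ) : ℂ) *
          ((‖(γ : ℂ)*z + (δ : ℂ)‖ : ℝ) : ℂ)) := by
    intro z hz
    have ha : (α:ℂ)*z + β ≠ 0 := stmt11_aux_ne α β hab z hz
    have hb : (γ:ℂ)*z + δ ≠ 0 := stmt11_aux_ne γ δ hgd z hz
    have hA : ((‖(α:ℂ)*z + β‖ : ℝ) : ℂ) ≠ 0 := by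
      exact_mod_cast (norm_ne_zero_iff.mpr ha)
    have hB : ((‖(γ:ℂ)*z + δ‖ : ℝ) : ℂ) ≠ 0 := by
      exact_mod_cast (norm_ne_zero_iff.mpr hb)
    have hZ : ((‖z‖ : ℝ) : ℂ)^2 = z * (starRingEnd ℂ) z := stmt11_sq_abs z
    have hB2 : ((‖(γ:ℂ)*z + δ‖ : ℝ) : ℂ)^2
        = ((γ:ℂ)*z + δ) * (starRingEnd ℂ) ((γ:ℂ)*z + δ) := stmt11_sq_abs _
    have hcb : (starRingEnd ℂ) ((γ:ℂ)*z + δ) ≠ 0 := by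
      intro h; apply hb
      have := congrArg (starRingEnd ℂ) h
      simpa using this
    show ((Real.sqrt (-K) : ℝ) : ℂ)/2 *
        ((((α:ℂ)*z + β) / ((γ:ℂ)*z + δ)) + (starRingEnd ℂ) (((α:ℂ)*z + β) / ((γ:ℂ)*z + δ)))
        / ((‖(((α:ℂ)*z + β) / ((γ:ℂ)*z + δ))‖ : ℝ) : ℂ) = _
    have key : (((α:ℂ)*z + β) / ((γ:ℂ)*z + δ)) + (starRingEnd ℂ) (((α:ℂ)*z + β) / ((γ:ℂ)*z + δ))
        = (2*(α : ℂ)*(γ : ℂ)*((‖z‖ : ℝ) : ℂ)^2 +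
            ((α : ℂ)*(δ : ℂ) + (β : ℂ)*(γ : ℂ))*(z + (starRingEnd ℂ) z) +
            2*(β : ℂ)*(δ : ℂ)) / ((‖(γ:ℂ)*z + δ‖ : ℝ) : ℂ)^2 := by
      rw [map_div₀, div_add_div _ _ hb hcb, hB2]
      congr 1
      simp only [map_add, map_mul, Complex.conj_ofReal]
      linear_combination (-2)*(α:ℂ)*(γ:ℂ)*hZ
    have habs : ((‖(((α:ℂ)*z + β) / ((γ:ℂ)*z + δ))‖ : ℝ) : ℂ)
        = ((‖(α:ℂ)*z + β‖ : ℝ) : ℂ) / ((‖(γ:ℂ)*z + δ‖ : ℝ) : ℂ) := by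
      rw [norm_div]; push_cast; ring
    rw [key, habs]
    field_simp
  refine ⟨hform, ?_⟩
  intro h
  -- ν vanishes on the imaginary axis
  have hν0 : ∀ t : ℝ, 0 < t → ν (t * Complex.I) = 0 := by
    intro t ht
    show ((Real.sqrt (-K) : ℝ) : ℂ)/2 * ((t:ℂ)*Complex.I + (starRingEnd ℂ) ((t:ℂ)*Complex.I))
        / ((‖(t:ℂ)*Complex.I‖ : ℝ) : ℂ) = 0
    simp [map_mul, Complex.conj_ofReal, Complex.conj_I]
  -- thus the numerator vanishes at z = t i
  have hnum : ∀ t : ℝ, 0 < t → 2*α*γ*t^2 + 2*β*δ = 0 := by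
    intro t ht
    have hzim : 0 < ((t:ℂ)*Complex.I).im := by simpa using ht
    have hLHS0 : ν (f ((t:ℂ)*Complex.I)) = 0 := by
      rcases h with h | h
      · rw [h _ hzim, hν0 t ht]
      · rw [h _ hzim, hν0 t ht, neg_zero]
    have heq := (hform _ hzim).symm.trans hLHS0
    have ha : (α:ℂ)*((t:ℂ)*Complex.I) + β ≠ 0 := by
      refine stmt11_aux_ne α β hab _ ?_
      simpa using ht
    have hb : (γ:ℂ)*((t:ℂ)*Complex.I) + δ ≠ 0 := by
      refine stmt11_aux_ne γ δ hgd _ ?_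
      simpa using ht
    have hA : ((‖(α:ℂ)*((t:ℂ)*Complex.I) + β‖ : ℝ) : ℂ) ≠ 0 := by
      exact_mod_cast (norm_ne_zero_iff.mpr ha)
    have hB : ((‖(γ:ℂ)*((t:ℂ)*Complex.I) + δ‖ : ℝ) : ℂ) ≠ 0 := by
      exact_mod_cast (norm_ne_zero_iff.mpr hb)
    rw [div_eq_zero_iff] at heq
    rcases heq with heq | heq
    · rcases mul_eq_zero.mp heq with heq | heq
      · exact absurd heq (div_ne_zero hc two_ne_zero)
      · -- numerator is zero
        have habst : ((‖(t:ℂ)*Complex.I‖ : ℝ) : ℂ) = (t:ℂ) := by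
          rw [norm_mul]
          simp [Complex.norm_real, abs_of_pos ht]
        have hconj : (starRingEnd ℂ) ((t:ℂ)*Complex.I) = -((t:ℂ)*Complex.I) := by
          simp [map_mul, Complex.conj_ofReal, Complex.conj_I]
        rw [habst, hconj] at heq
        have : ((2*α*γ*t^2 + 2*β*δ : ℝ) : ℂ) = 0 := by
          push_cast
          linear_combination heq
        exact_mod_cast this
    · exact absurd heq (mul_ne_zero hA hB)
  have h1 := hnum 1 one_pos
  have h2 := hnum 2 two_pos
  constructor <;> nlinarith [h1, h2]
end

section
/- Let G = D ∪ Dξ ⊆ PSL₂(ℝ) where D is the diagonal subgroup modulo ±I and ξ = [[0,1],[−1,0]]. Define on PSL₂(ℝ) the relation f₁ ≈ f₂ iff f₂ = g₁ f₁ g₂ for some g₁, g₂ ∈ G. For s ∈ ℝ set m_s = [[s, 1−s],[−1, 1]] (note det m_s = 1). Then for s, t ∈ ℝ: m_s ≈ m_t if and only if s = t, or (s + t = 1 and s ∉ [0,1]). -/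
/-- `SL(2,ℝ)`. -/
abbrev SL2R := Matrix.SpecialLinearGroup (Fin 2) ℝ

/-- `PSL(2,ℝ) = SL(2,ℝ)/{±I}`. -/
abbrev PSL2R := SL2R ⧸ Subgroup.center SL2R

/-- The projection `SL(2,ℝ) → PSL(2,ℝ)`. -/
def projPSL : SL2R →* PSL2R := QuotientGroup.mk' (Subgroup.center SL2R)

/-- The image `D` of the diagonal subgroup in `PSL(2,ℝ)`. -/
def Dset : Set PSL2R :=
  {g | ∃ (α : ℝ) (hα : α ≠ 0),
    g = projPSL ⟨!![α, 0; 0, α⁻¹], by rw [Matrix.det_fin_two_of]; field_simp <;> norm_num⟩}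

/-- The class `ξ` of `[[0,1],[-1,0]]` in `PSL(2,ℝ)`. -/
def xiP : PSL2R := projPSL ⟨!![0, 1; -1, 0], by rw [Matrix.det_fin_two_of]; norm_num⟩

/-- The subgroup `G = D ∪ Dξ` of `PSL(2,ℝ)`, as a set. -/
def Gset : Set PSL2R := Dset ∪ (fun g => g * xiP) '' Dset

/-- The class of the matrix `m_s = [[s, 1-s],[-1, 1]]` (of determinant 1). -/
def mP (s : ℝ) : PSL2R :=
  projPSL ⟨!![s, 1 - s; -1, 1], by rw [Matrix.det_fin_two_of]; ring⟩

noncomputable def dmat (α : ℝ) (hα : α ≠ 0) : SL2R :=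
  ⟨!![α, 0; 0, α⁻¹], by rw [Matrix.det_fin_two_of]; field_simp <;> norm_num⟩
def xim : SL2R := ⟨!![0, 1; -1, 0], by rw [Matrix.det_fin_two_of]; norm_num⟩
noncomputable def msm (s : ℝ) : SL2R :=
  ⟨!![s, 1 - s; -1, 1], by rw [Matrix.det_fin_two_of]; ring⟩

lemma mP_eq (s : ℝ) : mP s = projPSL (msm s) := rfl
lemma xiP_eq : xiP = projPSL xim := rfl

lemma center_sl2 (z : SL2R) (hz : z ∈ Subgroup.center SL2R) : z = 1 ∨ z = -1 := by
  obtain ⟨r, hr, hrz⟩ := Matrix.SpecialLinearGroup.mem_center_iff.mp hz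
  simp only [Fintype.card_fin] at hr
  rcases sq_eq_one_iff.mp hr with h | h <;> subst h
  · left; ext i j; rw [← hrz]; simp
  · right; ext i j
    rw [Matrix.SpecialLinearGroup.coe_neg, ← hrz]
    simp [Matrix.scalar_apply]
    rcases eq_or_ne i j with rfl | hij <;> simp [Matrix.one_apply]
    simp [Matrix.one_apply, hij]

lemma neg_one_mem_center : (-1 : SL2R) ∈ Subgroup.center SL2R := by
  rw [Matrix.SpecialLinearGroup.mem_center_iff]
  refine ⟨-1, by norm_num, ?_⟩
  ext i j
  rw [Matrix.SpecialLinearGroup.coe_neg]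
  simp [Matrix.scalar_apply]
  rcases eq_or_ne i j with rfl | hij <;> simp [Matrix.one_apply]
  simp [Matrix.one_apply, hij]

lemma proj_eq_iff (A B : SL2R) : projPSL A = projPSL B ↔ B = A ∨ B = -A := by
  rw [projPSL, QuotientGroup.mk'_eq_mk']
  constructor
  · rintro ⟨z, hz, rfl⟩
    rcases center_sl2 z hz with rfl | rfl
    · left; simp
    · right; simp [mul_neg]
  · rintro (rfl | rfl)
    · exact ⟨1, Subgroup.one_mem _, mul_one B⟩
    · exact ⟨-1, neg_one_mem_center, by simp [mul_neg]⟩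

lemma mem_Gset_iff (g : PSL2R) :
    g ∈ Gset ↔ ∃ (α : ℝ) (hα : α ≠ 0),
      g = projPSL (dmat α hα) ∨ g = projPSL (dmat α hα * xim) := by
  constructor
  · rintro (⟨α, hα, rfl⟩ | ⟨h, ⟨α, hα, rfl⟩, rfl⟩)
    · exact ⟨α, hα, Or.inl rfl⟩
    · exact ⟨α, hα, Or.inr (by rw [map_mul]; rfl)⟩
  · rintro ⟨α, hα, rfl | rfl⟩
    · exact Or.inl ⟨α, hα, rfl⟩
    · exact Or.inr ⟨projPSL (dmat α hα), ⟨α, hα, rfl⟩, by rw [map_mul]; rfl⟩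

theorem stmt14 (s t : ℝ) :
    (∃ g₁ ∈ Gset, ∃ g₂ ∈ Gset, mP t = g₁ * mP s * g₂) ↔
      s = t ∨ (s + t = 1 ∧ s ∉ Set.Icc (0:ℝ) 1) := by
  constructor
  · rintro ⟨g₁, hg₁, g₂, hg₂, h⟩
    obtain ⟨α, hα, h₁⟩ := (mem_Gset_iff g₁).mp hg₁
    obtain ⟨β, hβ, h₂⟩ := (mem_Gset_iff g₂).mp hg₂
    -- unify: there exist SL2 lifts A B
    have main : ∀ (A B : SL2R), g₁ = projPSL A → g₂ = projPSL B →
        ∃ ε : ℝ, ε ^ 2 = 1 ∧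
          ∀ i j, ((A * msm s * B : SL2R) : Matrix (Fin 2) (Fin 2) ℝ) i j
            = ε * ((msm t : SL2R) : Matrix (Fin 2) (Fin 2) ℝ) i j := by
      rintro A B rfl rfl
      rw [mP_eq, mP_eq, ← map_mul, ← map_mul] at h
      rcases (proj_eq_iff _ _).mp h with hh | hh
      · exact ⟨1, by norm_num, by rw [hh]; simp⟩
      · refine ⟨-1, by norm_num, ?_⟩
        rw [hh]
        intro i j
        rw [Matrix.SpecialLinearGroup.coe_neg]
        simp
    rcases h₁ with rfl | rfl <;> rcases h₂ with rfl | rfl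
    · -- D, D : s = t
      obtain ⟨ε, hε2, hent⟩ := main _ _ rfl rfl
      have e00 := hent 0 0
      have e10 := hent 1 0
      have e11 := hent 1 1
      simp only [Matrix.SpecialLinearGroup.coe_mul] at e00 e10 e11
      simp [dmat, msm, xim, Matrix.SpecialLinearGroup.coe_mul, Matrix.mul_fin_two] at e00 e10 e11
      left
      have h1 : (α * s * β) * (α⁻¹ * β⁻¹) = (ε * t) * ε := by rw [e00, e11]
      field_simp at h1
      have h2 : α * β * (s - t) = 0 := by linear_combination α * β * h1 + t * (α * β) * hε2
      exact sub_eq_zero.mp ((mul_eq_zero.mp h2).resolve_left (mul_ne_zero hα hβ))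
    · -- D, Dξ : contradiction
      obtain ⟨ε, hε2, hent⟩ := main _ _ rfl rfl
      have e10 := hent 1 0
      have e11 := hent 1 1
      simp only [Matrix.SpecialLinearGroup.coe_mul] at e10 e11
      simp [dmat, msm, xim, Matrix.SpecialLinearGroup.coe_mul, Matrix.mul_fin_two] at e10 e11
      exfalso
      have h1 : (α⁻¹ * β⁻¹) * (-(α⁻¹ * β)) = ε * ε := by rw [e10, e11]
      field_simp at h1
      have h2 : β * (α * α + 1) = 0 := by linear_combination -β * h1 - α * α * β * hε2
      rcases mul_eq_zero.mp h2 with h3 | h3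
      · exact hβ h3
      · nlinarith [sq_nonneg α]
    · -- Dξ, D : s + t = 1 ∧ s ∉ [0,1]
      obtain ⟨ε, hε2, hent⟩ := main _ _ rfl rfl
      have e00 := hent 0 0
      have e01 := hent 0 1
      have e10 := hent 1 0
      have e11 := hent 1 1
      simp only [Matrix.SpecialLinearGroup.coe_mul] at e00 e01 e10 e11
      simp [dmat, msm, xim, Matrix.SpecialLinearGroup.coe_mul, Matrix.mul_fin_two] at e00 e01 e10 e11
      right
      have h1 : (-(α * β)) * (α⁻¹ * s * β) = (ε * t) * ε := by rw [e00, e10]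
      have h2 : (α * β⁻¹) * (-(α⁻¹ * (1 - s) * β⁻¹)) = (ε * (1 - t)) * ε := by rw [e01, e11]
      field_simp at h1 h2
      have ht' : α * (t + s * β ^ 2) = 0 := by linear_combination -α * h1 - t * α * hε2
      have ht : t = -(s * β ^ 2) := by
        have := (mul_eq_zero.mp ht').resolve_left hα; linarith
      have h4' : α * ((s - 1) - (1 - t) * β ^ 2) = 0 := by
        linear_combination α * h2 + (1 - t) * β ^ 2 * α * hε2
      have h4 : s - 1 = (1 - t) * β ^ 2 := by
        have := (mul_eq_zero.mp h4').resolve_left hα; linarith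
      have hfact : (β ^ 2 + 1) * (s * (1 - β ^ 2) - 1) = 0 := by
        linear_combination (-β ^ 2) * ht + h4
      have hkey : s * (1 - β ^ 2) = 1 := by
        rcases mul_eq_zero.mp hfact with h5 | h5
        · nlinarith [sq_nonneg β]
        · linarith
      have hb : 0 < β ^ 2 := by positivity
      constructor
      · linear_combination ht + hkey
      · rintro ⟨h0, h1'⟩
        nlinarith [mul_nonneg h0 hb.le, mul_nonneg (by linarith : (0:ℝ) ≤ 1 - s) hb.le]
    · -- Dξ, Dξ : s = t
      obtain ⟨ε, hε2, hent⟩ := main _ _ rfl rfl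
      have e00 := hent 0 0
      have e11 := hent 1 1
      simp only [Matrix.SpecialLinearGroup.coe_mul] at e00 e11
      simp [dmat, msm, xim, Matrix.SpecialLinearGroup.coe_mul, Matrix.mul_fin_two] at e00 e11
      left
      have h1 : (-(α * β⁻¹)) * (-(α⁻¹ * s * β)) = (ε * t) * ε := by rw [e00, e11]
      field_simp at h1
      have h2 : α * β * (s - t) = 0 := by linear_combination α * β * h1 + t * (β * α) * hε2
      exact sub_eq_zero.mp ((mul_eq_zero.mp h2).resolve_left (mul_ne_zero hα hβ))
  · rintro (rfl | ⟨hst, hs⟩)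
    · refine ⟨1, ?_, 1, ?_, by simp⟩ <;>
      · rw [mem_Gset_iff]
        exact ⟨1, one_ne_zero, Or.inl (by
          have : dmat 1 one_ne_zero = 1 := by
            ext i j; fin_cases i <;> fin_cases j <;> simp [dmat]
          rw [this, map_one])⟩
    · rw [Set.mem_Icc] at hs
      have hs0 : s ≠ 0 := by rintro rfl; exact hs ⟨le_refl 0, zero_le_one⟩
      have hpos : 0 < (s - 1) / s := by
        rcases lt_or_ge s 0 with hneg | hge
        · exact div_pos_of_neg_of_neg (by linarith) hneg
        · have h1 : 1 < s := by
            by_contra hle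
            exact hs ⟨hge, by linarith⟩
          exact div_pos (by linarith) (by linarith)
      set β := Real.sqrt ((s - 1) / s) with hβdef
      have hβ2 : β ^ 2 = (s - 1) / s := Real.sq_sqrt hpos.le
      have hβ : β ≠ 0 := (Real.sqrt_pos.mpr hpos).ne'
      have hαn : s * β ≠ 0 := mul_ne_zero hs0 hβ
      refine ⟨projPSL (dmat (s * β) hαn * xim), ?_, projPSL (dmat β hβ), ?_, ?_⟩
      · rw [mem_Gset_iff]; exact ⟨s * β, hαn, Or.inr rfl⟩
      · rw [mem_Gset_iff]; exact ⟨β, hβ, Or.inl rfl⟩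
      · rw [mP_eq, mP_eq, ← map_mul, ← map_mul]
        refine ((proj_eq_iff _ _).mpr (Or.inl ?_)).symm
        have hb2 : β * β = (s - 1) / s := by rw [← sq]; exact hβ2
        have hb2' : β * β * s = s - 1 := by
          rw [eq_div_iff hs0] at hb2; linarith
        ext i j
        fin_cases i <;> fin_cases j <;> simp only [Matrix.SpecialLinearGroup.coe_mul] <;>
          simp [dmat, xim, msm, Matrix.SpecialLinearGroup.coe_mul, Matrix.mul_fin_two]
        · linear_combination hb2' + hst
        · rw [show (1:ℝ) - t = s from by linarith]; field_simp
        · field_simp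
        · field_simp
          linear_combination hb2'
end

section
/- Let G = D ∪ Dξ ⊆ PSL₂(ℝ) as above. Every f ∈ PSL₂(ℝ) \ G satisfies f = g₁ m_s g₂ for some g₁, g₂ ∈ G and some s ∈ [0, +∞), where m_s = [[s, 1−s],[−1,1]]; moreover this s is unique. -/
noncomputable def dM (α : ℝ) (hα : α ≠ 0) : SL2R := ⟨!![α,0;0,α⁻¹], by rw [Matrix.det_fin_two_of]; field_simp <;> norm_num⟩
def xiM : SL2R := ⟨!![0,1;-1,0], by rw [Matrix.det_fin_two_of]; norm_num⟩
noncomputable def mM (s : ℝ) : SL2R := ⟨!![s,1-s;-1,1], by rw [Matrix.det_fin_two_of]; ring⟩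

example : xiP = projPSL xiM := rfl
example (s : ℝ) : mP s = projPSL (mM s) := rfl

lemma dM_mem (α : ℝ) (hα : α ≠ 0) : projPSL (dM α hα) ∈ Dset := ⟨α, hα, rfl⟩

lemma mem_G_iff (g : PSL2R) : g ∈ Gset ↔
    ∃ (α : ℝ) (hα : α ≠ 0), g = projPSL (dM α hα) ∨ g = projPSL (dM α hα) * xiP := by
  constructor
  · rintro (⟨α, hα, rfl⟩ | ⟨x, ⟨α, hα, rfl⟩, rfl⟩)
    · exact ⟨α, hα, Or.inl rfl⟩
    · exact ⟨α, hα, Or.inr rfl⟩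
  · rintro ⟨α, hα, rfl | rfl⟩
    · exact Or.inl ⟨α, hα, rfl⟩
    · exact Or.inr ⟨_, ⟨α, hα, rfl⟩, rfl⟩

lemma dM_mul (α β : ℝ) (hα : α ≠ 0) (hβ : β ≠ 0) :
    dM α hα * dM β hβ = dM (α*β) (mul_ne_zero hα hβ) := by
  apply Subtype.ext
  show (!![α,0;0,α⁻¹] : Matrix (Fin 2) (Fin 2) ℝ) * !![β,0;0,β⁻¹] = _
  rw [Matrix.mul_fin_two]
  show _ = !![α*β,0;0,(α*β)⁻¹]
  rw [mul_inv]
  norm_num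

lemma dM_xiM (β : ℝ) (hβ : β ≠ 0) :
    dM β hβ * xiM = xiM * dM β⁻¹ (inv_ne_zero hβ) := by
  apply Subtype.ext
  show (!![β,0;0,β⁻¹] : Matrix (Fin 2) (Fin 2) ℝ) * !![0,1;-1,0] = !![0,1;-1,0] * !![β⁻¹,0;0,β⁻¹⁻¹]
  rw [Matrix.mul_fin_two, Matrix.mul_fin_two, inv_inv]
  norm_num

def negOne : SL2R := ⟨-1, by simp [Matrix.det_neg]⟩

lemma center_iff (C : SL2R) : C ∈ Subgroup.center SL2R ↔ C.1 = 1 ∨ C.1 = -1 := by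
  rw [Matrix.SpecialLinearGroup.mem_center_iff]
  constructor
  · rintro ⟨r, hr, hC⟩
    rw [Fintype.card_fin] at hr
    rcases sq_eq_one_iff.mp hr with h | h
    · left; rw [← hC, h]; simp [Matrix.scalar_apply]
    · right; rw [← hC, h]; simp [Matrix.scalar_apply]; ext i j; simp [Matrix.diagonal, Matrix.one_apply]; split <;> simp
  · rintro (h | h)
    · exact ⟨1, by norm_num, by rw [h]; simp [Matrix.scalar_apply]⟩
    · refine ⟨-1, by norm_num, ?_⟩
      rw [h]; simp [Matrix.scalar_apply]; ext i j; simp [Matrix.diagonal, Matrix.one_apply]; split <;> simp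

lemma psl_eq_iff (A B : SL2R) : projPSL A = projPSL B ↔ A.1 = B.1 ∨ A.1 = -B.1 := by
  rw [projPSL, QuotientGroup.mk'_eq_mk']
  constructor
  · rintro ⟨z, hz, rfl⟩
    rcases (center_iff z).mp hz with h | h
    · left; simp [Matrix.SpecialLinearGroup.coe_mul, h]
    · right; simp [Matrix.SpecialLinearGroup.coe_mul, h]
  · rintro (h | h)
    · exact ⟨1, Subgroup.one_mem _, by rw [mul_one]; exact Subtype.ext h⟩
    · refine ⟨negOne, (center_iff negOne).mpr (Or.inr rfl), Subtype.ext ?_⟩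
      rw [Matrix.SpecialLinearGroup.coe_mul, show negOne.1 = -1 from rfl, h]
      simp


lemma dM_congr {a b : ℝ} (ha : a ≠ 0) (hb : b ≠ 0) (h : a = b) : dM a ha = dM b hb := by
  subst h; rfl

lemma dM_one : dM 1 one_ne_zero = 1 := by
  apply Subtype.ext
  show (!![(1:ℝ),0;0,1⁻¹] : Matrix (Fin 2) (Fin 2) ℝ) = 1
  rw [Matrix.one_fin_two]; norm_num

lemma xiP_sq : xiP * xiP = 1 := by
  show projPSL xiM * projPSL xiM = 1
  rw [← map_mul, show (1 : PSL2R) = projPSL 1 from rfl, psl_eq_iff]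
  right
  show (!![(0:ℝ),1;-1,0] : Matrix (Fin 2) (Fin 2) ℝ) * !![0,1;-1,0] = -1
  rw [Matrix.mul_fin_two]
  ext i j
  fin_cases i <;> fin_cases j <;> simp

lemma dP_xiP (β : ℝ) (hβ : β ≠ 0) :
    projPSL (dM β hβ) * xiP = xiP * projPSL (dM β⁻¹ (inv_ne_zero hβ)) := by
  show projPSL (dM β hβ) * projPSL xiM = projPSL xiM * projPSL (dM β⁻¹ (inv_ne_zero hβ))
  rw [← map_mul, ← map_mul, dM_xiM]

lemma xiP_dP (β : ℝ) (hβ : β ≠ 0) :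
    xiP * projPSL (dM β hβ) = projPSL (dM β⁻¹ (inv_ne_zero hβ)) * xiP := by
  rw [dM_congr hβ (inv_ne_zero (inv_ne_zero hβ)) (inv_inv β).symm]
  exact (dP_xiP β⁻¹ (inv_ne_zero hβ)).symm

lemma G_mul {g h : PSL2R} (hg : g ∈ Gset) (hh : h ∈ Gset) : g * h ∈ Gset := by
  rw [mem_G_iff] at hg hh ⊢
  obtain ⟨α, hα, hg⟩ := hg
  obtain ⟨β, hβ, hh⟩ := hh
  rcases hg with rfl | rfl <;> rcases hh with rfl | rfl
  · exact ⟨α*β, mul_ne_zero hα hβ, Or.inl (by rw [← map_mul, dM_mul])⟩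
  · exact ⟨α*β, mul_ne_zero hα hβ, Or.inr (by rw [← mul_assoc, ← map_mul, dM_mul])⟩
  · refine ⟨α*β⁻¹, mul_ne_zero hα (inv_ne_zero hβ), Or.inr ?_⟩
    rw [mul_assoc, xiP_dP, ← mul_assoc, ← map_mul, dM_mul]
  · refine ⟨α*β⁻¹, mul_ne_zero hα (inv_ne_zero hβ), Or.inl ?_⟩
    rw [mul_assoc, ← mul_assoc xiP, xiP_dP, mul_assoc, xiP_sq, mul_one, ← map_mul, dM_mul]

lemma G_inv {g : PSL2R} (hg : g ∈ Gset) : g⁻¹ ∈ Gset := by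
  rw [mem_G_iff] at hg ⊢
  obtain ⟨α, hα, hg⟩ := hg
  rcases hg with rfl | rfl
  · refine ⟨α⁻¹, inv_ne_zero hα, Or.inl ?_⟩
    rw [eq_comm, eq_inv_iff_mul_eq_one, ← map_mul, dM_mul,
      dM_congr (mul_ne_zero (inv_ne_zero hα) hα) one_ne_zero (inv_mul_cancel₀ hα), dM_one, map_one]
  · refine ⟨α, hα, Or.inr ?_⟩
    rw [eq_comm, eq_inv_iff_mul_eq_one]
    rw [mul_assoc, ← mul_assoc xiP, xiP_dP, mul_assoc, xiP_sq, mul_one, ← map_mul, dM_mul,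
      dM_congr (mul_ne_zero hα (inv_ne_zero hα)) one_ne_zero (mul_inv_cancel₀ hα), dM_one, map_one]

lemma xiP_mem : xiP ∈ Gset := by
  rw [mem_G_iff]
  exact ⟨1, one_ne_zero, Or.inr (by rw [dM_one, map_one, one_mul])⟩

lemma dP_mem (α : ℝ) (hα : α ≠ 0) : projPSL (dM α hα) ∈ Gset := Or.inl (dM_mem α hα)

lemma main_ex {a b c d : ℝ} (hdet : a*d - b*c = 1) (h1 : c*d < 0) (h2 : 0 ≤ a*d) :
    ∃ (α β : ℝ), α ≠ 0 ∧ β ≠ 0 ∧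
      (!![a,b;c,d] : Matrix (Fin 2) (Fin 2) ℝ) = !![α,0;0,α⁻¹] * !![a*d, 1-(a*d); -1,1] * !![β,0;0,β⁻¹] := by
  have hd : d ≠ 0 := by rintro rfl; simp at h1
  have hc : c ≠ 0 := by rintro rfl; simp at h1
  obtain ⟨S, hSpos, hsq⟩ : ∃ S : ℝ, 0 < S ∧ S * S = -(c*d) :=
    ⟨Real.sqrt (-(c*d)), Real.sqrt_pos.mpr (by linarith), Real.mul_self_sqrt (by linarith)⟩
  have hSne : S ≠ 0 := ne_of_gt hSpos
  refine ⟨S⁻¹, S/d, inv_ne_zero hSne, div_ne_zero hSne hd, ?_⟩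
  rw [Matrix.mul_fin_two, Matrix.mul_fin_two]
  ext i j
  fin_cases i <;> fin_cases j <;> simp <;> field_simp
  · linear_combination b * hsq + d * hdet
  · linear_combination hsq

lemma exG {F : SL2R} {a b c d : ℝ} (hF : F.1 = !![a,b;c,d]) (h1 : c*d < 0) (h2 : 0 ≤ a*d) :
    ∃ g₁ ∈ Gset, ∃ g₂ ∈ Gset, projPSL F = g₁ * mP (a*d) * g₂ := by
  have hdet : a*d - b*c = 1 := by
    have h := F.2
    rw [hF, Matrix.det_fin_two_of] at h
    exact h
  obtain ⟨α, β, hα, hβ, hEq⟩ := main_ex hdet h1 h2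
  refine ⟨_, dP_mem α hα, _, dP_mem β hβ, ?_⟩
  show projPSL F = projPSL (dM α hα) * projPSL (mM (a*d)) * projPSL (dM β hβ)
  rw [← map_mul, ← map_mul]
  congr 1
  apply Subtype.ext
  rw [hF, hEq]
  rfl

lemma coe_xi_mul (F : SL2R) {a b c d : ℝ} (hF : F.1 = !![a,b;c,d]) :
    (xiM * F).1 = !![c,d;-a,-b] := by
  show xiM.1 * F.1 = _
  ext i j
  fin_cases i <;> fin_cases j <;>
    simp [Matrix.SpecialLinearGroup.coe_mul, hF, xiM, Matrix.mul_apply, Fin.sum_univ_two]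

lemma coe_mul_xi (F : SL2R) {a b c d : ℝ} (hF : F.1 = !![a,b;c,d]) :
    (F * xiM).1 = !![-b,a;-d,c] := by
  show F.1 * xiM.1 = _
  ext i j
  fin_cases i <;> fin_cases j <;>
    simp [Matrix.SpecialLinearGroup.coe_mul, hF, xiM, Matrix.mul_apply, Fin.sum_univ_two]

lemma W_xi_left {f : PSL2R} {s : ℝ} (h : ∃ g₁ ∈ Gset, ∃ g₂ ∈ Gset, xiP * f = g₁ * mP s * g₂) :
    ∃ g₁ ∈ Gset, ∃ g₂ ∈ Gset, f = g₁ * mP s * g₂ := by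
  obtain ⟨g₁, h₁, g₂, h₂, he⟩ := h
  refine ⟨xiP * g₁, G_mul xiP_mem h₁, g₂, h₂, ?_⟩
  have hf : f = xiP * (xiP * f) := by rw [← mul_assoc, xiP_sq, one_mul]
  rw [hf, he, ← mul_assoc, ← mul_assoc]

lemma W_xi_right {f : PSL2R} {s : ℝ} (h : ∃ g₁ ∈ Gset, ∃ g₂ ∈ Gset, f * xiP = g₁ * mP s * g₂) :
    ∃ g₁ ∈ Gset, ∃ g₂ ∈ Gset, f = g₁ * mP s * g₂ := by
  obtain ⟨g₁, h₁, g₂, h₂, he⟩ := h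
  refine ⟨g₁, h₁, g₂ * xiP, G_mul h₂ xiP_mem, ?_⟩
  have hf : f = f * xiP * xiP := by rw [mul_assoc, xiP_sq, mul_one]
  rw [hf, he, mul_assoc, mul_assoc]

lemma proj_xi_mul (F : SL2R) : projPSL (xiM * F) = xiP * projPSL F := map_mul _ _ _

lemma proj_mul_xi (F : SL2R) : projPSL (F * xiM) = projPSL F * xiP := map_mul _ _ _

lemma exists_s {F : SL2R} {a b c d : ℝ} (hF : F.1 = !![a,b;c,d])
    (hbc : ¬(b = 0 ∧ c = 0)) (had : ¬(a = 0 ∧ d = 0)) :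
    ∃ s : ℝ, 0 ≤ s ∧ ∃ g₁ ∈ Gset, ∃ g₂ ∈ Gset, projPSL F = g₁ * mP s * g₂ := by
  have hdet : a*d - b*c = 1 := by
    have h := F.2
    rw [hF, Matrix.det_fin_two_of] at h
    exact h
  -- four constructors
  have case1 : c*d < 0 → 0 ≤ a*d → ∃ s : ℝ, 0 ≤ s ∧ ∃ g₁ ∈ Gset, ∃ g₂ ∈ Gset,
      projPSL F = g₁ * mP s * g₂ := fun h1 h2 => ⟨a*d, h2, exG hF h1 h2⟩
  have case2 : a*b < 0 → a*d ≤ 1 → ∃ s : ℝ, 0 ≤ s ∧ ∃ g₁ ∈ Gset, ∃ g₂ ∈ Gset,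
      projPSL F = g₁ * mP s * g₂ := by
    intro h1 h2
    refine ⟨c*(-b), by nlinarith, ?_⟩
    apply W_xi_left
    rw [← proj_xi_mul]
    exact exG (coe_xi_mul F hF) (by nlinarith) (by nlinarith)
  have case3 : 0 < c*d → a*d ≤ 1 → ∃ s : ℝ, 0 ≤ s ∧ ∃ g₁ ∈ Gset, ∃ g₂ ∈ Gset,
      projPSL F = g₁ * mP s * g₂ := by
    intro h1 h2
    refine ⟨(-b)*c, by nlinarith, ?_⟩
    apply W_xi_right
    rw [← proj_mul_xi]
    exact exG (coe_mul_xi F hF) (by nlinarith) (by nlinarith)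
  have case4 : 0 < a*b → 0 ≤ a*d → ∃ s : ℝ, 0 ≤ s ∧ ∃ g₁ ∈ Gset, ∃ g₂ ∈ Gset,
      projPSL F = g₁ * mP s * g₂ := by
    intro h1 h2
    refine ⟨(-d)*(-a), by nlinarith, ?_⟩
    apply W_xi_left
    apply W_xi_right
    rw [← proj_xi_mul, ← proj_mul_xi]
    exact exG (coe_mul_xi _ (coe_xi_mul F hF)) (by nlinarith) (by nlinarith)
  rcases lt_trichotomy (c*d) 0 with h | h | h
  · rcases le_or_gt 0 (a*d) with h2 | h2
    · exact case1 h h2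
    · refine case2 ?_ (by linarith)
      have hbc' : b*c = a*d - 1 := by linarith
      have h5 : 0 < (a*b)*(c*d) := by
        nlinarith [mul_pos (show (0:ℝ) < -(a*d) by linarith)
          (show (0:ℝ) < -(b*c) by rw [hbc']; linarith)]
      by_contra hno
      push_neg at hno
      nlinarith [h5]
  · rcases mul_eq_zero.mp h with hc | hd
    · have hb : b ≠ 0 := fun hb0 => hbc ⟨hb0, hc⟩
      have h1 : a*d = 1 := by rw [hc] at hdet; linarith
      have ha : a ≠ 0 := by rintro rfl; rw [zero_mul] at h1; norm_num at h1
      rcases (mul_ne_zero ha hb).lt_or_gt with hab | hab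
      · exact case2 hab (by linarith)
      · exact case4 hab (by linarith)
    · have ha : a ≠ 0 := fun ha0 => had ⟨ha0, hd⟩
      have h1 : b*c = -1 := by rw [hd] at hdet; linarith
      have hb : b ≠ 0 := by rintro rfl; rw [zero_mul] at h1; norm_num at h1
      rcases (mul_ne_zero ha hb).lt_or_gt with hab | hab
      · exact case2 hab (by rw [hd]; norm_num)
      · exact case4 hab (by rw [hd]; norm_num)
  · rcases le_or_gt (a*d) 1 with h2 | h2
    · exact case3 h h2
    · refine case4 ?_ (by linarith)
      have hbc' : b*c = a*d - 1 := by linarith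
      have h5 : 0 < (a*b)*(c*d) := by
        nlinarith [mul_pos (show (0:ℝ) < a*d by linarith)
          (show (0:ℝ) < b*c by rw [hbc']; linarith)]
      by_contra hno
      push_neg at hno
      nlinarith [h5]

lemma mem_of_diag {F : SL2R} {a b c d : ℝ} (hF : F.1 = !![a,b;c,d]) (hb : b = 0) (hc : c = 0) :
    projPSL F ∈ Gset := by
  have hdet : a*d - b*c = 1 := by
    have h := F.2; rw [hF, Matrix.det_fin_two_of] at h; exact h
  rw [hb, hc] at hdet
  have had : a * d = 1 := by linarith
  have ha : a ≠ 0 := by rintro rfl; rw [zero_mul] at had; norm_num at had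
  refine Or.inl ⟨a, ha, ?_⟩
  congr 1
  apply Subtype.ext
  show F.1 = !![a,0;0,a⁻¹]
  have hd : d = a⁻¹ := by field_simp; linarith
  rw [hF, hb, hc, hd]

lemma mem_of_antidiag {F : SL2R} {a b c d : ℝ} (hF : F.1 = !![a,b;c,d]) (ha : a = 0) (hd : d = 0) :
    projPSL F ∈ Gset := by
  have hdet : a*d - b*c = 1 := by
    have h := F.2; rw [hF, Matrix.det_fin_two_of] at h; exact h
  rw [ha, hd] at hdet
  have hbc : b * c = -1 := by linarith
  have hb : b ≠ 0 := by rintro rfl; rw [zero_mul] at hbc; norm_num at hbc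
  refine Or.inr ⟨projPSL (dM b hb), ⟨b, hb, rfl⟩, ?_⟩
  show projPSL (dM b hb) * projPSL xiM = projPSL F
  rw [← map_mul]
  congr 1
  apply Subtype.ext
  show (!![b,0;0,b⁻¹] : Matrix (Fin 2) (Fin 2) ℝ) * !![0,1;-1,0] = F.1
  have hc : c = -b⁻¹ := by field_simp; linarith
  rw [Matrix.mul_fin_two, hF, ha, hd, hc]
  norm_num

lemma coe_dXd (α γ : ℝ) (hα : α ≠ 0) (hγ : γ ≠ 0) (X : SL2R) :
    (dM α hα * X * dM γ hγ).1 =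
      !![α*γ*(X.1 0 0), α*γ⁻¹*(X.1 0 1); α⁻¹*γ*(X.1 1 0), α⁻¹*γ⁻¹*(X.1 1 1)] := by
  rw [Matrix.SpecialLinearGroup.coe_mul, Matrix.SpecialLinearGroup.coe_mul,
    Matrix.eta_fin_two X.1]
  show (!![α,0;0,α⁻¹]) * _ * (!![γ,0;0,γ⁻¹]) = _
  rw [Matrix.mul_fin_two, Matrix.mul_fin_two]
  ext i j
  fin_cases i <;> fin_cases j <;> simp <;> ring

lemma coe_mM (s : ℝ) : (mM s).1 = !![s, 1-s; -1, 1] := rfl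

lemma coe_xi_mM (s : ℝ) : (xiM * mM s).1 = !![-1, 1; -s, s-1] := by
  show xiM.1 * (mM s).1 = _
  ext i j
  fin_cases i <;> fin_cases j <;>
    simp [Matrix.SpecialLinearGroup.coe_mul, mM, xiM, Matrix.mul_apply, Fin.sum_univ_two] <;> ring

lemma coe_mM_xi (s : ℝ) : (mM s * xiM).1 = !![s-1, s; -1, -1] := by
  show (mM s).1 * xiM.1 = _
  ext i j
  fin_cases i <;> fin_cases j <;>
    simp [Matrix.SpecialLinearGroup.coe_mul, mM, xiM, Matrix.mul_apply, Fin.sum_univ_two] <;> ring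

lemma coe_xi_mM_xi (s : ℝ) : (xiM * mM s * xiM).1 = !![-1, -1; 1-s, -s] := by
  show xiM.1 * (mM s).1 * xiM.1 = _
  ext i j
  fin_cases i <;> fin_cases j <;>
    simp [Matrix.SpecialLinearGroup.coe_mul, mM, xiM, Matrix.mul_apply, Fin.sum_univ_two] <;> ring

lemma uniq_case1 {s t α γ : ℝ} (hα : α ≠ 0) (hγ : γ ≠ 0)
    (k : (mM t).1 = (dM α hα * mM s * dM γ hγ).1 ∨
         (mM t).1 = -(dM α hα * mM s * dM γ hγ).1) : s = t := by
  rw [coe_dXd, coe_mM] at k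
  rcases k with k | k <;>
  [skip; skip] <;>
  · have e00 := congrFun (congrFun k 0) 0
    have e11 := congrFun (congrFun k 1) 1
    simp [coe_mM, mM] at e00 e11
    field_simp at e00 e11
    first
    | linear_combination -e00 - s*e11
    | linear_combination -e00 + s*e11

lemma uniq_case2 {s t α γ : ℝ} (hs : 0 ≤ s) (ht : 0 ≤ t) (hα : α ≠ 0) (hγ : γ ≠ 0)
    (k : (mM t).1 = (dM α hα * (xiM * mM s) * dM γ hγ).1 ∨
         (mM t).1 = -(dM α hα * (xiM * mM s) * dM γ hγ).1) : s = t := by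
  rw [coe_dXd, coe_xi_mM] at k
  rcases k with k | k
  · have e00 := congrFun (congrFun k 0) 0
    have e01 := congrFun (congrFun k 0) 1
    have e11 := congrFun (congrFun k 1) 1
    simp [coe_mM, mM] at e00 e01 e11
    field_simp at e00 e01 e11
    have h1 : s = 1 - t := by linear_combination -e11 + e00
    have h3 : α*α = -(t*s) := by linear_combination -α*e01 + (1-t)*e00 + t*h1
    nlinarith [h3, mul_self_pos.mpr hα, mul_nonneg ht hs]
  · have e00 := congrFun (congrFun k 0) 0
    have e01 := congrFun (congrFun k 0) 1
    have e11 := congrFun (congrFun k 1) 1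
    simp [coe_mM, mM] at e00 e01 e11
    field_simp at e00 e01 e11
    have h1 : s = 1 - t := by linear_combination e11 + e00
    have h3 : α*α = -(t*s) := by linear_combination α*e01 + (1-t)*e00 + t*h1
    nlinarith [h3, mul_self_pos.mpr hα, mul_nonneg ht hs]

lemma uniq_case3 {s t α γ : ℝ} (hα : α ≠ 0) (hγ : γ ≠ 0)
    (k : (mM t).1 = (dM α hα * (mM s * xiM) * dM γ hγ).1 ∨
         (mM t).1 = -(dM α hα * (mM s * xiM) * dM γ hγ).1) : s = t := by
  rw [coe_dXd, coe_mM_xi] at k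
  rcases k with k | k <;>
  · have e10 := congrFun (congrFun k 1) 0
    have e11 := congrFun (congrFun k 1) 1
    simp [coe_mM, mM] at e10 e11
    field_simp at e10 e11
    nlinarith [e10, e11, mul_self_nonneg α, mul_self_nonneg γ, mul_self_nonneg (α-γ), mul_self_nonneg (α+γ)]

lemma uniq_case4 {s t α γ : ℝ} (hα : α ≠ 0) (hγ : γ ≠ 0)
    (k : (mM t).1 = (dM α hα * (xiM * mM s * xiM) * dM γ hγ).1 ∨
         (mM t).1 = -(dM α hα * (xiM * mM s * xiM) * dM γ hγ).1) : s = t := by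
  rw [coe_dXd, coe_xi_mM_xi] at k
  rcases k with k | k <;>
  · have e00 := congrFun (congrFun k 0) 0
    have e11 := congrFun (congrFun k 1) 1
    simp [coe_mM, mM] at e00 e11
    field_simp at e00 e11
    first
    | linear_combination -e11 - e00
    | linear_combination e11 - e00

lemma uniq {s t : ℝ} (hs : 0 ≤ s) (ht : 0 ≤ t) {g₁ g₂ : PSL2R} (hg₁ : g₁ ∈ Gset)
    (hg₂ : g₂ ∈ Gset) (h : mP t = g₁ * mP s * g₂) : s = t := by
  rw [mem_G_iff] at hg₁ hg₂
  obtain ⟨α, hα, h₁⟩ := hg₁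
  obtain ⟨β, hβ, h₂⟩ := hg₂
  have hm : ∀ u : ℝ, mP u = projPSL (mM u) := fun _ => rfl
  rcases h₁ with rfl | rfl <;> rcases h₂ with rfl | rfl
  · refine uniq_case1 hα hβ ((psl_eq_iff _ _).mp ?_)
    simp only [map_mul, ← hm]
    rw [h]
  · rw [dP_xiP β hβ, ← mul_assoc, mul_assoc _ (mP s) xiP] at h
    refine uniq_case3 hα (inv_ne_zero hβ) ((psl_eq_iff _ _).mp ?_)
    simp only [map_mul, ← hm]
    rw [h]
    show _ * (projPSL (mM s) * projPSL xiM) * _ = _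
    simp only [hm, mul_assoc]
  · refine uniq_case2 hs ht hα hβ ((psl_eq_iff _ _).mp ?_)
    simp only [map_mul, ← hm]
    rw [h]
    show projPSL (dM α hα) * projPSL xiM * projPSL (mM s) * _ = _
    simp only [hm, mul_assoc]
  · rw [dP_xiP β hβ, ← mul_assoc, mul_assoc _ (mP s) xiP] at h
    refine uniq_case4 hα (inv_ne_zero hβ) ((psl_eq_iff _ _).mp ?_)
    simp only [map_mul, ← hm]
    rw [h]
    show projPSL (dM α hα) * projPSL xiM * (projPSL (mM s) * projPSL xiM) * _ = _
    simp only [hm, mul_assoc]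

theorem stmt15 (f : PSL2R) (hf : f ∉ Gset) :
    ∃! s : ℝ, 0 ≤ s ∧ ∃ g₁ ∈ Gset, ∃ g₂ ∈ Gset, f = g₁ * mP s * g₂ := by
  obtain ⟨F, rfl⟩ := QuotientGroup.mk'_surjective (Subgroup.center SL2R) f
  obtain ⟨a, b, c, d, hF⟩ : ∃ a b c d : ℝ, F.1 = !![a,b;c,d] :=
    ⟨_, _, _, _, Matrix.eta_fin_two F.1⟩
  have hbc : ¬(b = 0 ∧ c = 0) := fun ⟨h1, h2⟩ => hf (mem_of_diag hF h1 h2)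
  have had : ¬(a = 0 ∧ d = 0) := fun ⟨h1, h2⟩ => hf (mem_of_antidiag hF h1 h2)
  obtain ⟨s, hs0, hW⟩ := exists_s hF hbc had
  refine ⟨s, ⟨hs0, hW⟩, ?_⟩
  rintro t ⟨ht0, g₁, hg₁, g₂, hg₂, hEq⟩
  obtain ⟨h₁, hh₁, h₂, hh₂, hEs⟩ := hW
  have e : g₁ * mP t * g₂ = h₁ * mP s * h₂ := by rw [← hEq, ← hEs]; rfl
  have key : mP t = (g₁⁻¹ * h₁) * mP s * (h₂ * g₂⁻¹) := by
    calc mP t = g₁⁻¹ * (g₁ * mP t * g₂) * g₂⁻¹ := by group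
    _ = g₁⁻¹ * (h₁ * mP s * h₂) * g₂⁻¹ := by rw [e]
    _ = (g₁⁻¹ * h₁) * mP s * (h₂ * g₂⁻¹) := by group
  exact (uniq hs0 ht0 (G_mul (G_inv hg₁) hh₁) (G_mul hh₂ (G_inv hg₂)) key).symm
end
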